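/- For 0 ≤ i ≤ d, both (𝓜⁻¹ − q^{2i−d}I)U_i ⊆ U_{i−1} and (𝓜⁻¹ − q^{2i−d}I)U_i^↓ ⊆ U_{i−1}^↓. -/

import Mathlib

private lemma left_inv_eq' {R : Type*} [Ring R] {M x : R} (hM : IsUnit M)
    (h : x * M = 1) : Ring.inverse M = x := by
  rw [← one_mul (Ring.inverse M), ← h, mul_assoc, Ring.mul_inverse_cancel _ hM, mul_one]

private lemma inv_eig' {𝕂 : Type*} [Field 𝕂] {V : Type*} [AddCommGroup V] [Module 𝕂 V]
    {C : Module.End 𝕂 V} (hC : IsUnit C) {c : 𝕂} (hc : c ≠ 0) {v : V}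
    (h : C v = c • v) : Ring.inverse C v = c⁻¹ • v := by
  have h1 : (Ring.inverse C * C) v = v := by
    rw [Ring.inverse_mul_cancel _ hC, Module.End.one_apply]
  rw [Module.End.mul_apply, h, map_smul] at h1
  calc Ring.inverse C v = c⁻¹ • (c • Ring.inverse C v) := by
        rw [smul_smul, inv_mul_cancel₀ hc, one_smul]
    _ = c⁻¹ • v := by rw [h1]

private lemma key' {𝕂 : Type*} [Field 𝕂] {V : Type*} [AddCommGroup V] [Module 𝕂 V]
    (d : ℕ) (q : 𝕂) (hq : q ≠ 0) (c : 𝕂)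
    (C ψ N : Module.End 𝕂 V) (hC : IsUnit C)
    (U : ℕ → Submodule 𝕂 V)
    (hCU : ∀ i, i ≤ d → ∀ v ∈ U i, C v = (q ^ ((d : ℤ) - 2 * (i : ℤ))) • v)
    (hψ0 : ∀ v ∈ U 0, ψ v = 0)
    (hψU : ∀ i, 1 ≤ i → i ≤ d → ∀ v ∈ U i, ψ v ∈ U (i - 1))
    (hN : Ring.inverse N = Ring.inverse C * (1 - c • ψ)) :
    ∀ i, i ≤ d →
      Submodule.map (Ring.inverse N - (q ^ (2 * (i : ℤ) - (d : ℤ))) • 1) (U i)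
        ≤ (if i = 0 then ⊥ else U (i - 1)) := by
  intro i hi
  rintro x ⟨v, hv, rfl⟩
  have heig : Ring.inverse C v = q ^ (2 * (i : ℤ) - (d : ℤ)) • v := by
    have h := inv_eig' hC (zpow_ne_zero _ hq) (hCU i hi v hv)
    rwa [← zpow_neg, neg_sub] at h
  have hval : (Ring.inverse N - (q ^ (2 * (i : ℤ) - (d : ℤ))) • 1) v
      = (-c) • Ring.inverse C (ψ v) := by
    rw [LinearMap.sub_apply, hN, Module.End.mul_apply, LinearMap.smul_apply, Module.End.one_apply,
      LinearMap.sub_apply, LinearMap.smul_apply, Module.End.one_apply, map_sub, map_smul, heig,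
      sub_sub_cancel_left, neg_smul]
  by_cases h0 : i = 0
  · subst h0
    rw [if_pos rfl, Submodule.mem_bot, hval, hψ0 v hv, map_zero, smul_zero]
  · rw [if_neg h0, hval]
    have hi1 : 1 ≤ i := Nat.one_le_iff_ne_zero.2 h0
    have hψv : ψ v ∈ U (i - 1) := hψU i hi1 hi v hv
    have h2 := inv_eig' hC (zpow_ne_zero _ hq)
      (hCU (i - 1) (le_trans (Nat.sub_le i 1) hi) (ψ v) hψv)
    rw [h2]
    exact Submodule.smul_mem _ _ (Submodule.smul_mem _ _ hψv)

theorem stmt_19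
    {𝕂 : Type*} [Field 𝕂] {V : Type*} [AddCommGroup V] [Module 𝕂 V]
    [FiniteDimensional 𝕂 V]
    (d : ℕ) (hd : 1 ≤ d) (q a : 𝕂) (hq : q ≠ 0) (ha : a ≠ 0)
    (hq2 : ∀ i : ℕ, 1 ≤ i → i ≤ d → q ^ (2 * i) ≠ 1)
    (ha2 : ∀ i : ℤ, 1 - (d : ℤ) ≤ i → i ≤ (d : ℤ) - 1 → a ^ 2 ≠ q ^ (2 * i))
    (K : Module.End 𝕂 V) (hK : IsUnit K)
    (U : ℕ → Submodule 𝕂 V)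
    (hUne : ∀ i, i ≤ d → U i ≠ ⊥)
    (hUint : DirectSum.IsInternal (fun i : Fin (d + 1) => U i.1))
    (hKU : ∀ i, i ≤ d → ∀ v ∈ U i, K v = (q ^ ((d : ℤ) - 2 * (i : ℤ))) • v)
    (ψ : Module.End 𝕂 V)
    (hψ0 : ∀ v ∈ U 0, ψ v = 0)
    (hψU : ∀ i, 1 ≤ i → i ≤ d → ∀ v ∈ U i, ψ v ∈ U (i - 1))
    (hψnil : ψ ^ (d + 1) = 0)
    (hKψ : K * ψ = q ^ 2 • (ψ * K))
    (hinv : ∀ x : 𝕂, IsUnit (1 - x • ψ))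
    (B : Module.End 𝕂 V)
    (hB : B = (1 - (a * q) • ψ) * Ring.inverse (1 - (a⁻¹ * q) • ψ) * K)
    (M : Module.End 𝕂 V)
    (hM : M = (a - a⁻¹)⁻¹ • (a • K - a⁻¹ • B))
    (hMunit : IsUnit M)
    (Ud : ℕ → Submodule 𝕂 V)
    (hUdne : ∀ i, i ≤ d → Ud i ≠ ⊥)
    (hUdint : DirectSum.IsInternal (fun i : Fin (d + 1) => Ud i.1))
    (hBUd : ∀ i, i ≤ d → ∀ v ∈ Ud i, B v = (q ^ ((d : ℤ) - 2 * (i : ℤ))) • v)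
    (hψ0d : ∀ v ∈ Ud 0, ψ v = 0)
    (hψUd : ∀ i, 1 ≤ i → i ≤ d → ∀ v ∈ Ud i, ψ v ∈ Ud (i - 1)):
    ∀ i, i ≤ d →
      Submodule.map (Ring.inverse M - (q ^ (2 * (i : ℤ) - (d : ℤ))) • 1) (U i)
        ≤ (if i = 0 then ⊥ else U (i - 1)) ∧
      Submodule.map (Ring.inverse M - (q ^ (2 * (i : ℤ) - (d : ℤ))) • 1) (Ud i)
        ≤ (if i = 0 then ⊥ else Ud (i - 1)) := by
  set e : Module.End 𝕂 V := 1 - (a⁻¹ * q) • ψ with he_def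
  set f : Module.End 𝕂 V := 1 - (a * q) • ψ with hf_def
  have he : IsUnit e := hinv _
  have hf : IsUnit f := hinv _
  -- a - a⁻¹ ≠ 0
  have hane : a - a⁻¹ ≠ 0 := by
    intro h
    have h2 : a ^ 2 = 1 := by
      have := sub_eq_zero.1 h
      field_simp at this
      exact this
    exact ha2 0 (by omega) (by omega) (by simpa using h2)
  -- a • e - a⁻¹ • f = (a - a⁻¹) • 1
  have hcomb : a • e - a⁻¹ • f = (a - a⁻¹) • (1 : Module.End 𝕂 V) := by
    rw [he_def, hf_def, smul_sub, smul_sub, smul_smul, smul_smul,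
      mul_inv_cancel_left₀ ha, inv_mul_cancel_left₀ ha, sub_smul]
    abel
  clear_value e f
  -- M = e⁻¹ * K
  have hM' : M = Ring.inverse e * K := by
    have h1 : ((a • e - a⁻¹ • f) * Ring.inverse e) * K
        = a • K - a⁻¹ • (f * Ring.inverse e * K) := by
      rw [sub_mul, sub_mul, smul_mul_assoc, smul_mul_assoc, smul_mul_assoc, smul_mul_assoc,
        Ring.mul_inverse_cancel _ he, one_mul, mul_assoc]
    rw [hM, hB, ← h1, hcomb, smul_mul_assoc, smul_mul_assoc, smul_smul,
      inv_mul_cancel₀ hane, one_smul, one_mul]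
  have hMK : Ring.inverse M = Ring.inverse K * e := by
    apply left_inv_eq' hMunit
    rw [hM', ← mul_assoc, mul_assoc (Ring.inverse K), Ring.mul_inverse_cancel _ he,
      mul_one, Ring.inverse_mul_cancel _ hK]
  have hfM : f * M = B := by rw [hM', hB, mul_assoc]
  have hBunit : IsUnit B := by rw [← hfM]; exact hf.mul hMunit
  have hMB : Ring.inverse M = Ring.inverse B * f := by
    apply left_inv_eq' hMunit
    rw [mul_assoc, hfM, Ring.inverse_mul_cancel _ hBunit]
  rw [he_def] at hMK
  rw [hf_def] at hMB
  intro i hi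
  exact ⟨key' d q hq (a⁻¹ * q) K ψ M hK U hKU hψ0 hψU hMK i hi,
    key' d q hq (a * q) B ψ M hBunit Ud hBUd hψ0d hψUd hMB i hi⟩
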